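/- Let (ρ_b, ρ_g, ι) be an effect-oriented rule and t : G ⟹_{ρ_c, m_c} H an effect-oriented transformation via one of its induced rules ρ_c. Let x ∈ R_c \ (K_c ∪ R_b) represent one of the potential creations of (ρ_b, ρ_g, ι) that has been performed by t, let K_b^+ be the extension of K_b with x (provided this is defined as a graph, i.e., x is a node, or x is an edge whose endpoints lie in K_b), and let ι^+ : K_b → K_b^+ be the corresponding inclusion. Then either (1) (alternative action) for every injective morphism m_b^+ : K_b^+ → G with m_b^+ ∘ ι^+ = m_c ∘ l_c ∘ ι_K^{m}, the element m_b^+(x) of G has a pre-image from L_c under m_c, or (2) (non-existence of match) no injective morphism m_b^+ : K_b^+ → G with m_b^+ ∘ ι^+ = m_c ∘ l_c ∘ ι_K^{m} exists. -/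

import Mathlib

/-! ## Finite graphs and graph morphisms -/

/-- A finite graph: nodes, edges, source and target functions. -/
structure Gra where
  V : Type
  E : Type
  finV : Finite V
  finE : Finite E
  src : E → V
  tar : E → V

attribute [instance] Gra.finV Gra.finE

/-- A graph morphism: commutes with source and target. -/
structure GraHom (G H : Gra) where
  fV : G.V → H.V
  fE : G.E → H.E
  comm_src : ∀ e, H.src (fE e) = fV (G.src e)
  comm_tar : ∀ e, H.tar (fE e) = fV (G.tar e)

def GraHom.id (G : Gra) : GraHom G G :=
  ⟨fun v => v, fun e => e, fun _ => rfl, fun _ => rfl⟩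

def GraHom.comp {G H K : Gra} (g : GraHom H K) (f : GraHom G H) : GraHom G K where
  fV := g.fV ∘ f.fV
  fE := g.fE ∘ f.fE
  comm_src e := by simp only [Function.comp_apply, g.comm_src, f.comm_src]
  comm_tar e := by simp only [Function.comp_apply, g.comm_tar, f.comm_tar]

/-! ## Typed graphs over a fixed type graph -/

/-- A typed graph over the type graph `TG`. -/
structure TGraph (TG : Gra) where
  gr : Gra
  typ : GraHom gr TG

/-- A typed graph morphism. -/
structure THom {TG : Gra} (A B : TGraph TG) extends GraHom A.gr B.gr where
  typV : ∀ v, B.typ.fV (toGraHom.fV v) = A.typ.fV v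
  typE : ∀ e, B.typ.fE (toGraHom.fE e) = A.typ.fE e

def THom.id {TG : Gra} (A : TGraph TG) : THom A A :=
  ⟨GraHom.id A.gr, fun _ => rfl, fun _ => rfl⟩

def THom.comp {TG : Gra} {A B C : TGraph TG} (g : THom B C) (f : THom A B) : THom A C :=
  ⟨g.toGraHom.comp f.toGraHom,
   fun v => (g.typV (f.toGraHom.fV v)).trans (f.typV v),
   fun e => (g.typE (f.toGraHom.fE e)).trans (f.typE e)⟩

def THom.Injective {TG : Gra} {A B : TGraph TG} (f : THom A B) : Prop :=
  Function.Injective f.fV ∧ Function.Injective f.fE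

def THom.Bijective {TG : Gra} {A B : TGraph TG} (f : THom A B) : Prop :=
  Function.Bijective f.fV ∧ Function.Bijective f.fE

/-- The action of a typed morphism on elements (nodes and edges). -/
def THom.elem {TG : Gra} {A B : TGraph TG} (f : THom A B) :
    A.gr.V ⊕ A.gr.E → B.gr.V ⊕ B.gr.E :=
  Sum.map f.fV f.fE

/-! ## Pullback and pushout squares of typed graphs -/

/-- The square `f ∘ pa = g ∘ pb` (with apex `P`) is a pullback. -/
def IsPB {TG : Gra} {P A B C : TGraph TG} (pa : THom P A) (pb : THom P B)
    (f : THom A C) (g : THom B C) : Prop :=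
  f.comp pa = g.comp pb ∧
  ∀ (X : TGraph TG) (qa : THom X A) (qb : THom X B), f.comp qa = g.comp qb →
    ∃! h : THom X P, pa.comp h = qa ∧ pb.comp h = qb

/-- The square `ia ∘ f = ib ∘ g` (with corner object the codomain of `ia`/`ib`)
is a pushout. -/
def IsPO {TG : Gra} {P A B C : TGraph TG} (f : THom P A) (g : THom P B)
    (ia : THom A C) (ib : THom B C) : Prop :=
  ia.comp f = ib.comp g ∧
  ∀ (X : TGraph TG) (qa : THom A X) (qb : THom B X), qa.comp f = qb.comp g →
    ∃! h : THom C X, h.comp ia = qa ∧ h.comp ib = qb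

/-! ## Application conditions, rules -/

/-- An application condition over `L`, given semantically: a predicate on
morphisms with domain `L`. -/
def AppCond {TG : Gra} (L : TGraph TG) : Type 1 :=
  ∀ X : TGraph TG, THom L X → Prop

/-- Shift of an application condition along a morphism, characterized
semantically: `m ⊨ Shift(b, ac)` iff `m ∘ b ⊨ ac`. -/
def Shift {TG : Gra} {L L' : TGraph TG} (b : THom L L') (ac : AppCond L) :
    AppCond L' :=
  fun X m => ac X (m.comp b)

/-- Semantic equivalence of application conditions (on injective morphisms). -/
def CondEquiv {TG : Gra} {L : TGraph TG} (ac₁ ac₂ : AppCond L) : Prop :=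
  ∀ (X : TGraph TG) (m : THom L X), m.Injective → (ac₁ X m ↔ ac₂ X m)

/-- A rule: a span of injective typed morphisms together with an application
condition over the left-hand side. -/
structure Rule (TG : Gra) where
  L : TGraph TG
  K : TGraph TG
  R : TGraph TG
  l : THom K L
  r : THom K R
  l_inj : l.Injective
  r_inj : r.Injective
  ac : AppCond L

/-- The dangling condition for a pre-match `m` of a rule: no node of `L \ K` is
mapped to a node of `G` incident to an edge outside `m(E_L)`. -/
def Dangling {TG : Gra} (ρr : Rule TG) {G : TGraph TG} (m : THom ρr.L G) : Prop :=
  ∀ v : ρr.L.gr.V, (∀ k : ρr.K.gr.V, ρr.l.fV k ≠ v) →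
    ∀ e : G.gr.E, (G.gr.src e = m.fV v ∨ G.gr.tar e = m.fV v) →
      ∃ e' : ρr.L.gr.E, m.fE e' = e

/-- A match for a rule: an injective morphism satisfying the application
condition at which the rule is applicable (dangling condition). -/
def IsMatch {TG : Gra} (ρr : Rule TG) {G : TGraph TG} (m : THom ρr.L G) : Prop :=
  m.Injective ∧ ρr.ac G m ∧ Dangling ρr m

/-- Isomorphism of rules. -/
def RuleIso {TG : Gra} (ρ₁ ρ₂ : Rule TG) : Prop :=
  ∃ (fL : THom ρ₁.L ρ₂.L) (fK : THom ρ₁.K ρ₂.K) (fR : THom ρ₁.R ρ₂.R),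
    fL.Bijective ∧ fK.Bijective ∧ fR.Bijective ∧
    fL.comp ρ₁.l = ρ₂.l.comp fK ∧ fR.comp ρ₁.r = ρ₂.r.comp fK ∧
    CondEquiv ρ₂.ac (Shift fL ρ₁.ac)

/-! ## Effect-oriented rules -/

/-- An effect-oriented rule: a maximal rule
`ρ_g = (L_g ←l_g– K –r_g→ R_g, ac_g)` together with a base rule
`ρ_b = (L_b ←l_b– K –r_b→ R_b, ac_b)` that is a subrule of it via
`(ι_L, id, ι_R)` (the interfaces coincide, `ι_K` is the identity). -/
structure EORule (TG : Gra) where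
  K : TGraph TG
  Lb : TGraph TG
  Rb : TGraph TG
  Lg : TGraph TG
  Rg : TGraph TG
  lb : THom K Lb
  rb : THom K Rb
  lg : THom K Lg
  rg : THom K Rg
  ιL : THom Lb Lg
  ιR : THom Rb Rg
  lb_inj : lb.Injective
  rb_inj : rb.Injective
  lg_inj : lg.Injective
  rg_inj : rg.Injective
  ιL_inj : ιL.Injective
  ιR_inj : ιR.Injective
  commL : ιL.comp lb = lg
  commR : ιR.comp rb = rg
  pbL : IsPB lb (THom.id K) ιL lg
  pbR : IsPB rb (THom.id K) ιR rg
  acb : AppCond Lb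
  acg : AppCond Lg
  ac_equiv : CondEquiv acg (Shift ιL acb)

/-- An induced rule of an effect-oriented rule, given by a factorisation
`ι_L = ι_L^{m′} ∘ ι_L^{i′}` through `L_i′`, a factorisation
`r_g = r_c ∘ ι_K^{m}` through `K_c` whose square with `(r_b, ι_R)` is a
pullback, and a pushout `(L_c, u, l_c)` of `k_1 = ι_L^{i′} ∘ l_b` and
`ι_K^{m}`; the right-hand side is `R_g`. -/
structure InducedRule {TG : Gra} (ρ : EORule TG) where
  Li : TGraph TG
  ιLi : THom ρ.Lb Li
  ιLm : THom Li ρ.Lg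
  ιLi_inj : ιLi.Injective
  ιLm_inj : ιLm.Injective
  factL : ιLm.comp ιLi = ρ.ιL
  Kc : TGraph TG
  ιKm : THom ρ.K Kc
  rc : THom Kc ρ.Rg
  ιKm_inj : ιKm.Injective
  rc_inj : rc.Injective
  factR : rc.comp ιKm = ρ.rg
  pbRc : IsPB ρ.rb ιKm ρ.ιR rc
  Lc : TGraph TG
  u : THom Li Lc
  lc : THom Kc Lc
  u_inj : u.Injective
  lc_inj : lc.Injective
  po : IsPO (ιLi.comp ρ.lb) ιKm u lc

namespace InducedRule

variable {TG : Gra} {ρ : EORule TG}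

/-- `k_1 = ι_L^{i′} ∘ l_b`. -/
def k1 (c : InducedRule ρ) : THom ρ.K c.Li := c.ιLi.comp ρ.lb

/-- `ι_L^c = u ∘ ι_L^{i′}`, the embedding of `L_b` into `L_c`. -/
def ιLc (c : InducedRule ρ) : THom ρ.Lb c.Lc := c.u.comp c.ιLi

/-- The application condition of the induced rule: `ac_c = Shift(ι_L^c, ac_b)`. -/
def acc (c : InducedRule ρ) : AppCond c.Lc := Shift c.ιLc ρ.acb

/-- The induced rule as a rule `(L_c ←l_c– K_c –r_c→ R_g, ac_c)`. -/
def rule (c : InducedRule ρ) : Rule TG where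
  L := c.Lc
  K := c.Kc
  R := ρ.Rg
  l := c.lc
  r := c.rc
  l_inj := c.lc_inj
  r_inj := c.rc_inj
  ac := c.acc

/-- The size of an induced rule: `|L_i′ \ L_b| + |K_c \ K_b|`
(counting nodes and edges). -/
noncomputable def size (c : InducedRule ρ) : ℕ :=
  Nat.card {x : c.Li.gr.V ⊕ c.Li.gr.E // x ∉ Set.range c.ιLi.elem} +
  Nat.card {x : c.Kc.gr.V ⊕ c.Kc.gr.E // x ∉ Set.range c.ιKm.elem}

end InducedRule

/-! ## Double-pushout transformations -/

/-- A double-pushout (DPO) transformation `G ⟹_{ρr,m} H`. -/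
structure DPOTrafo {TG : Gra} (ρr : Rule TG) (G H : TGraph TG) where
  m : THom ρr.L G
  m_inj : m.Injective
  m_ac : ρr.ac G m
  D : TGraph TG
  d : THom ρr.K D
  g : THom D G
  h : THom D H
  n : THom ρr.R H
  po1 : IsPO ρr.l d m g
  po2 : IsPO ρr.r d n h

/-! ## Locally complete matches -/

/-- A match `m_c` for an induced rule, compatible with the pre-match
`m_b = m_c ∘ ι_L^c` for the base rule, is locally complete w.r.t. `m_b`:
no strictly larger factorisation (on the deletion or the creation side)
admits a compatible injective extension that induces an injective morphism
on the corresponding pushout object. -/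
def LocallyComplete {TG : Gra} {ρ : EORule TG} (c : InducedRule ρ)
    {G : TGraph TG} (mc : THom c.Lc G) : Prop :=
  (∀ (Li'' : TGraph TG) (iLi'' : THom ρ.Lb Li'') (iLm'' : THom Li'' ρ.Lg)
      (j : THom c.Li Li''),
      iLi''.Injective → iLm''.Injective → iLm''.comp iLi'' = ρ.ιL →
      j.Injective → ¬ j.Bijective → j.comp c.ιLi = iLi'' → iLm''.comp j = c.ιLm →
      ∀ e1' : THom Li'' G, e1'.Injective → e1'.comp iLi'' = mc.comp c.ιLc →
      ∀ (Lc'' : TGraph TG) (u'' : THom Li'' Lc'') (lc'' : THom c.Kc Lc''),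
        IsPO (iLi''.comp ρ.lb) c.ιKm u'' lc'' →
      ∀ w : THom Lc'' G, w.comp u'' = e1' → w.comp lc'' = mc.comp c.lc →
        ¬ w.Injective) ∧
  (∀ (Kc' : TGraph TG) (iKm' : THom ρ.K Kc') (rc' : THom Kc' ρ.Rg)
      (j : THom c.Kc Kc'),
      iKm'.Injective → rc'.Injective → rc'.comp iKm' = ρ.rg →
      j.Injective → ¬ j.Bijective → j.comp c.ιKm = iKm' → rc'.comp j = c.rc →
      ∀ e2' : THom Kc' G, e2'.Injective → e2'.comp iKm' = (mc.comp c.ιLc).comp ρ.lb →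
      ∀ (Lc'' : TGraph TG) (u'' : THom c.Li Lc'') (lc'' : THom Kc' Lc''),
        IsPO (c.ιLi.comp ρ.lb) iKm' u'' lc'' →
      ∀ w : THom Lc'' G, w.comp u'' = mc.comp c.u → w.comp lc'' = e2' →
        ¬ w.Injective)

/-! ## Auxiliary infrastructure for the proof -/

namespace EOAux

theorem graHom_ext {G H : Gra} {f g : GraHom G H} (hV : f.fV = g.fV)
    (hE : f.fE = g.fE) : f = g := by
  cases f; cases g; cases hV; cases hE; rfl

theorem thom_ext {TG : Gra} {A B : TGraph TG} {f g : THom A B}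
    (hV : f.fV = g.fV) (hE : f.fE = g.fE) : f = g := by
  cases f with
  | mk tf p1 p2 =>
    cases g with
    | mk tg q1 q2 =>
      obtain rfl : tf = tg := graHom_ext hV hE
      rfl

theorem congr_fV {TG : Gra} {A B : TGraph TG} {f g : THom A B} (h : f = g)
    (v : A.gr.V) : f.fV v = g.fV v := by rw [h]

theorem congr_fE {TG : Gra} {A B : TGraph TG} {f g : THom A B} (h : f = g)
    (e : A.gr.E) : f.fE e = g.fE e := by rw [h]

theorem comp_assoc {TG : Gra} {A B C D : TGraph TG} (f : THom C D)
    (g : THom B C) (h : THom A B) :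
    (f.comp g).comp h = f.comp (g.comp h) := rfl

theorem comp_inj {TG : Gra} {A B C : TGraph TG} {f : THom B C} {g : THom A B}
    (hf : f.Injective) (hg : g.Injective) : (f.comp g).Injective :=
  ⟨hf.1.comp hg.1, hf.2.comp hg.2⟩

theorem elem_comp {TG : Gra} {A B C : TGraph TG} (f : THom B C) (g : THom A B)
    (z : A.gr.V ⊕ A.gr.E) : (f.comp g).elem z = f.elem (g.elem z) := by
  cases z <;> rfl

theorem elem_inj {TG : Gra} {A B : TGraph TG} {f : THom A B} (h : f.Injective) :
    Function.Injective f.elem :=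
  h.1.sumMap h.2

section ConcPO

open Classical

variable {TG : Gra} {A B C : TGraph TG}

/-- Vertex component of the canonical map `C → B ⊔_A C` (for `q : A → C`
injective, `p : A → B`). -/
noncomputable def inCV (p : THom A B) (q : THom A C) (v : C.gr.V) :
    B.gr.V ⊕ {w : C.gr.V // ∀ a, q.fV a ≠ w} :=
  if h : ∃ a, q.fV a = v then Sum.inl (p.fV h.choose)
  else Sum.inr ⟨v, fun a ha => h ⟨a, ha⟩⟩

noncomputable def inCE (p : THom A B) (q : THom A C) (e : C.gr.E) :
    B.gr.E ⊕ {e' : C.gr.E // ∀ a, q.fE a ≠ e'} :=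
  if h : ∃ a, q.fE a = e then Sum.inl (p.fE h.choose)
  else Sum.inr ⟨e, fun a ha => h ⟨a, ha⟩⟩

theorem inCV_q (p : THom A B) (q : THom A C) (hq : q.Injective) (a : A.gr.V) :
    inCV p q (q.fV a) = Sum.inl (p.fV a) := by
  unfold inCV
  rw [dif_pos ⟨a, rfl⟩]
  exact congrArg Sum.inl
    (congrArg p.fV (hq.1 (⟨a, rfl⟩ : ∃ a', q.fV a' = q.fV a).choose_spec))

theorem inCE_q (p : THom A B) (q : THom A C) (hq : q.Injective) (a : A.gr.E) :
    inCE p q (q.fE a) = Sum.inl (p.fE a) := by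
  unfold inCE
  rw [dif_pos ⟨a, rfl⟩]
  exact congrArg Sum.inl
    (congrArg p.fE (hq.2 (⟨a, rfl⟩ : ∃ a', q.fE a' = q.fE a).choose_spec))

theorem inCV_inl (p : THom A B) (q : THom A C) {v : C.gr.V} {b : B.gr.V}
    (h : inCV p q v = Sum.inl b) : ∃ a, q.fV a = v := by
  by_contra hn
  unfold inCV at h
  rw [dif_neg hn] at h
  exact Sum.inr_ne_inl h

theorem inCE_inl (p : THom A B) (q : THom A C) {e : C.gr.E} {b : B.gr.E}
    (h : inCE p q e = Sum.inl b) : ∃ a, q.fE a = e := by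
  by_contra hn
  unfold inCE at h
  rw [dif_neg hn] at h
  exact Sum.inr_ne_inl h

theorem elim_inCV (p : THom A B) (q : THom A C) (v : C.gr.V) :
    Sum.elim B.typ.fV (fun w => C.typ.fV w.1) (inCV p q v) = C.typ.fV v := by
  unfold inCV
  split
  · next h =>
    show B.typ.fV (p.fV h.choose) = C.typ.fV v
    rw [p.typV, ← q.typV, h.choose_spec]
  · rfl

theorem elim_inCE (p : THom A B) (q : THom A C) (e : C.gr.E) :
    Sum.elim B.typ.fE (fun w => C.typ.fE w.1) (inCE p q e) = C.typ.fE e := by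
  unfold inCE
  split
  · next h =>
    show B.typ.fE (p.fE h.choose) = C.typ.fE e
    rw [p.typE, ← q.typE, h.choose_spec]
  · rfl

/-- The concrete pushout object of `B ←p– A –q→ C` with `q` injective. -/
noncomputable def poT (p : THom A B) (q : THom A C) : TGraph TG where
  gr :=
    { V := B.gr.V ⊕ {w : C.gr.V // ∀ a, q.fV a ≠ w}
      E := B.gr.E ⊕ {e : C.gr.E // ∀ a, q.fE a ≠ e}
      finV := inferInstance
      finE := inferInstance
      src := Sum.elim (fun e => Sum.inl (B.gr.src e))
        (fun e => inCV p q (C.gr.src e.1))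
      tar := Sum.elim (fun e => Sum.inl (B.gr.tar e))
        (fun e => inCV p q (C.gr.tar e.1)) }
  typ :=
    { fV := Sum.elim B.typ.fV (fun w => C.typ.fV w.1)
      fE := Sum.elim B.typ.fE (fun e => C.typ.fE e.1)
      comm_src := by
        rintro (e | ⟨e, he⟩)
        · exact B.typ.comm_src e
        · show TG.src (C.typ.fE e) = Sum.elim _ _ (inCV p q (C.gr.src e))
          rw [elim_inCV]
          exact C.typ.comm_src e
      comm_tar := by
        rintro (e | ⟨e, he⟩)
        · exact B.typ.comm_tar e
        · show TG.tar (C.typ.fE e) = Sum.elim _ _ (inCV p q (C.gr.tar e))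
          rw [elim_inCV]
          exact C.typ.comm_tar e }

/-- First leg `B → B ⊔_A C`. -/
noncomputable def inB (p : THom A B) (q : THom A C) : THom B (poT p q) where
  fV := Sum.inl
  fE := Sum.inl
  comm_src := fun _ => rfl
  comm_tar := fun _ => rfl
  typV := fun _ => rfl
  typE := fun _ => rfl

theorem inB_inj (p : THom A B) (q : THom A C) : (inB p q).Injective :=
  ⟨Sum.inl_injective, Sum.inl_injective⟩

/-- Second leg `C → B ⊔_A C`. -/
noncomputable def inC (p : THom A B) (q : THom A C) (hq : q.Injective) :
    THom C (poT p q) where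
  fV := inCV p q
  fE := inCE p q
  comm_src := fun e => by
    show (poT p q).gr.src (inCE p q e) = inCV p q (C.gr.src e)
    unfold inCE
    split
    · next h =>
      have hspec := h.choose_spec
      show Sum.inl (B.gr.src (p.fE h.choose)) = _
      generalize hgen : h.choose = a0
      rw [hgen] at hspec
      rw [p.comm_src, ← hspec, q.comm_src, inCV_q p q hq]
    · rfl
  comm_tar := fun e => by
    show (poT p q).gr.tar (inCE p q e) = inCV p q (C.gr.tar e)
    unfold inCE
    split
    · next h =>
      have hspec := h.choose_spec
      show Sum.inl (B.gr.tar (p.fE h.choose)) = _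
      generalize hgen : h.choose = a0
      rw [hgen] at hspec
      rw [p.comm_tar, ← hspec, q.comm_tar, inCV_q p q hq]
    · rfl
  typV := fun v => elim_inCV p q v
  typE := fun e => elim_inCE p q e

theorem po_comm (p : THom A B) (q : THom A C) (hq : q.Injective) :
    (inB p q).comp p = (inC p q hq).comp q :=
  thom_ext (funext fun a => (inCV_q p q hq a).symm)
    (funext fun a => (inCE_q p q hq a).symm)

theorem med_elim_inCV (p : THom A B) (q : THom A C) {X : TGraph TG}
    (qB : THom B X) (qC : THom C X) (hco : qB.comp p = qC.comp q) (v : C.gr.V) :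
    Sum.elim qB.fV (fun w => qC.fV w.1) (inCV p q v) = qC.fV v := by
  unfold inCV
  split
  · next h =>
    exact (congr_fV hco h.choose).trans (congrArg qC.fV h.choose_spec)
  · rfl

theorem med_elim_inCE (p : THom A B) (q : THom A C) {X : TGraph TG}
    (qB : THom B X) (qC : THom C X) (hco : qB.comp p = qC.comp q) (e : C.gr.E) :
    Sum.elim qB.fE (fun w => qC.fE w.1) (inCE p q e) = qC.fE e := by
  unfold inCE
  split
  · next h =>
    exact (congr_fE hco h.choose).trans (congrArg qC.fE h.choose_spec)
  · rfl

/-- The mediating morphism out of the concrete pushout. -/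
noncomputable def med (p : THom A B) (q : THom A C) {X : TGraph TG}
    (qB : THom B X) (qC : THom C X) (hco : qB.comp p = qC.comp q) :
    THom (poT p q) X where
  fV := Sum.elim qB.fV (fun w => qC.fV w.1)
  fE := Sum.elim qB.fE (fun e => qC.fE e.1)
  comm_src := by
    rintro (e | ⟨e, he⟩)
    · exact qB.comm_src e
    · show X.gr.src (qC.fE e) = Sum.elim qB.fV _ (inCV p q (C.gr.src e))
      rw [med_elim_inCV p q qB qC hco]
      exact qC.comm_src e
  comm_tar := by
    rintro (e | ⟨e, he⟩)
    · exact qB.comm_tar e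
    · show X.gr.tar (qC.fE e) = Sum.elim qB.fV _ (inCV p q (C.gr.tar e))
      rw [med_elim_inCV p q qB qC hco]
      exact qC.comm_tar e
  typV := by
    rintro (v | ⟨v, hv⟩)
    · exact qB.typV v
    · exact qC.typV v
  typE := by
    rintro (e | ⟨e, he⟩)
    · exact qB.typE e
    · exact qC.typE e

theorem med_inB (p : THom A B) (q : THom A C) {X : TGraph TG}
    (qB : THom B X) (qC : THom C X) (hco : qB.comp p = qC.comp q) :
    (med p q qB qC hco).comp (inB p q) = qB :=
  thom_ext rfl rfl

theorem med_inC (p : THom A B) (q : THom A C) (hq : q.Injective) {X : TGraph TG}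
    (qB : THom B X) (qC : THom C X) (hco : qB.comp p = qC.comp q) :
    (med p q qB qC hco).comp (inC p q hq) = qC :=
  thom_ext (funext (med_elim_inCV p q qB qC hco))
    (funext (med_elim_inCE p q qB qC hco))

theorem med_unique (p : THom A B) (q : THom A C) (hq : q.Injective)
    {X : TGraph TG} (qB : THom B X) (qC : THom C X)
    (hco : qB.comp p = qC.comp q) (h' : THom (poT p q) X)
    (h1 : h'.comp (inB p q) = qB) (h2 : h'.comp (inC p q hq) = qC) :
    h' = med p q qB qC hco := by
  apply thom_ext
  · funext v
    rcases v with b | ⟨w, hw⟩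
    · exact congr_fV h1 b
    · have hCV : inCV p q w = Sum.inr ⟨w, fun a ha => (⟨a, ha⟩ : ∃ a, q.fV a = w).elim
          (fun a' ha' => absurd ha' (hw a'))⟩ := by
        unfold inCV
        rw [dif_neg (fun hex => hex.elim fun a ha => hw a ha)]
      have := congr_fV h2 w
      show h'.fV (Sum.inr ⟨w, hw⟩) = qC.fV w
      rw [← this]
      show h'.fV _ = h'.fV (inCV p q w)
      rw [hCV]
  · funext e
    rcases e with b | ⟨w, hw⟩
    · exact congr_fE h1 b
    · have hCE : inCE p q w = Sum.inr ⟨w, fun a ha => (⟨a, ha⟩ : ∃ a, q.fE a = w).elim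
          (fun a' ha' => absurd ha' (hw a'))⟩ := by
        unfold inCE
        rw [dif_neg (fun hex => hex.elim fun a ha => hw a ha)]
      have := congr_fE h2 w
      show h'.fE (Sum.inr ⟨w, hw⟩) = qC.fE w
      rw [← this]
      show h'.fE _ = h'.fE (inCE p q w)
      rw [hCE]

theorem po_ispo (p : THom A B) (q : THom A C) (hq : q.Injective) :
    IsPO p q (inB p q) (inC p q hq) := by
  refine ⟨po_comm p q hq, fun X qB qC hco => ?_⟩
  exact ⟨med p q qB qC hco,
    ⟨med_inB p q qB qC hco, med_inC p q hq qB qC hco⟩,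
    fun h' hh => med_unique p q hq qB qC hco h' hh.1 hh.2⟩

theorem med_injective (p : THom A B) (q : THom A C) {X : TGraph TG}
    (qB : THom B X) (qC : THom C X) (hco : qB.comp p = qC.comp q)
    (hB : qB.Injective) (hC : qC.Injective)
    (hV : ∀ (b : B.gr.V) (w : C.gr.V), (∀ a, q.fV a ≠ w) → qB.fV b ≠ qC.fV w)
    (hE : ∀ (b : B.gr.E) (w : C.gr.E), (∀ a, q.fE a ≠ w) → qB.fE b ≠ qC.fE w) :
    (med p q qB qC hco).Injective := by
  constructor
  · rintro (b1 | ⟨w1, h1⟩) (b2 | ⟨w2, h2⟩) h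
    · exact congrArg Sum.inl (hB.1 h)
    · exact absurd h (hV b1 w2 h2)
    · exact absurd h.symm (hV b2 w1 h1)
    · exact congrArg Sum.inr (Subtype.ext (hC.1 h))
  · rintro (b1 | ⟨w1, h1⟩) (b2 | ⟨w2, h2⟩) h
    · exact congrArg Sum.inl (hB.2 h)
    · exact absurd h (hE b1 w2 h2)
    · exact absurd h.symm (hE b2 w1 h1)
    · exact congrArg Sum.inr (Subtype.ext (hC.2 h))

end ConcPO

end EOAux

open EOAux

/-- **Theorem (Characterising effect-oriented transformations, creation part).**
Let `(ρ_b, ρ_g, ι)` be an effect-oriented rule and `t : G ⟹_{ρ_c,m_c} H` an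
effect-oriented transformation via one of its induced rules `ρ_c`. Let
`x ∈ R_c \ (K_c ∪ R_b)` represent one of the potential creations performed by
`t`, let `K_b^+` be the extension of `K_b` with `x` (a graph extending `K_b`
that embeds into `R_g` over `r_g` with image exactly `r_g(K_b) ∪ {x}`), and
`ι^+ : K_b → K_b^+` the corresponding inclusion. Then either (1) for every
injective morphism `m_b^+ : K_b^+ → G` with
`m_b^+ ∘ ι^+ = m_c ∘ l_c ∘ ι_K^{m}`, the element `m_b^+(x)` of `G` has a
pre-image from `L_c` under `m_c`, or (2) no such injective morphism exists. -/
theorem characterising_eo_transformations_creation {TG : Gra}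
    (ρ : EORule TG) (c : InducedRule ρ) (G H : TGraph TG)
    (t : DPOTrafo c.rule G H)
    (hlc : LocallyComplete c t.m)
    (x : ρ.Rg.gr.V ⊕ ρ.Rg.gr.E)
    (hx1 : x ∉ Set.range c.rc.elem) (hx2 : x ∉ Set.range ρ.ιR.elem)
    (Kbp : TGraph TG) (iplus : THom ρ.K Kbp) (emb : THom Kbp ρ.Rg)
    (hiplus : iplus.Injective) (hemb : emb.Injective)
    (hcomm : emb.comp iplus = ρ.rg)
    (hrange : Set.range emb.elem = Set.range ρ.rg.elem ∪ {x}) :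
    (∀ mbp : THom Kbp G, mbp.Injective →
        mbp.comp iplus = t.m.comp (c.lc.comp c.ιKm) →
        ∀ x' : Kbp.gr.V ⊕ Kbp.gr.E, emb.elem x' = x →
          mbp.elem x' ∈ Set.range t.m.elem) ∨
    ¬ ∃ mbp : THom Kbp G, mbp.Injective ∧
        mbp.comp iplus = t.m.comp (c.lc.comp c.ιKm) := by
    classical
  by_contra hcon
  push_neg at hcon
  obtain ⟨⟨mbp, hmbpinj, hcompat, x', hx'emb, hx'notin⟩, -⟩ := hcon
  have hx_rg : x ∉ Set.range ρ.rg.elem := by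
    rintro ⟨z, hz⟩
    exact hx1 ⟨c.ιKm.elem z, by rw [← elem_comp, c.factR]; exact hz⟩
  have hkey : ∀ y : Kbp.gr.V ⊕ Kbp.gr.E, y ∉ Set.range iplus.elem → y = x' := by
    intro y hy
    have h1 : emb.elem y ∈ Set.range ρ.rg.elem ∪ {x} := by
      rw [← hrange]; exact ⟨y, rfl⟩
    rcases h1 with ⟨z, hz⟩ | h1
    · exfalso
      apply hy
      refine ⟨z, elem_inj hemb ?_⟩
      rw [← hz, ← hcomm, elem_comp]
    · exact elem_inj hemb ((Set.mem_singleton_iff.mp h1).trans hx'emb.symm)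
  have hnewV : ∀ b : Kbp.gr.V, (∀ a, iplus.fV a ≠ b) →
      (Sum.inl b : Kbp.gr.V ⊕ Kbp.gr.E) = x' := by
    intro b hb
    apply hkey
    rintro ⟨z, hz⟩
    rcases z with a | a
    · exact hb a (Sum.inl_injective hz)
    · exact Sum.inr_ne_inl hz
  have hnewE : ∀ b : Kbp.gr.E, (∀ a, iplus.fE a ≠ b) →
      (Sum.inr b : Kbp.gr.V ⊕ Kbp.gr.E) = x' := by
    intro b hb
    apply hkey
    rintro ⟨z, hz⟩
    rcases z with a | a
    · exact Sum.inl_ne_inr hz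
    · exact hb a (Sum.inr_injective hz)
  have hx'new : x' ∉ Set.range iplus.elem := by
    rintro ⟨a, ha⟩
    apply hx_rg
    refine ⟨a, ?_⟩
    rw [← hcomm, elem_comp, ha, hx'emb]
  have hco1 : c.rc.comp c.ιKm = emb.comp iplus := c.factR.trans hcomm.symm
  have hco2 : (t.m.comp c.lc).comp c.ιKm = mbp.comp iplus := by
    exact hcompat.symm
  -- the extended interface and the induced morphisms
  let Kc' : TGraph TG := poT c.ιKm iplus
  let j : THom c.Kc Kc' := inB c.ιKm iplus
  let iKm' : THom ρ.K Kc' := j.comp c.ιKm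
  let rc' : THom Kc' ρ.Rg := med c.ιKm iplus c.rc emb hco1
  let e2' : THom Kc' G := med c.ιKm iplus (t.m.comp c.lc) mbp hco2
  have hiKm'inj : iKm'.Injective := comp_inj (inB_inj _ _) c.ιKm_inj
  have hrc'inj : rc'.Injective := by
    refine med_injective c.ιKm iplus c.rc emb hco1 c.rc_inj hemb ?_ ?_
    · intro k b hb heq
      apply hx1
      refine ⟨Sum.inl k, ?_⟩
      show Sum.inl (c.rc.fV k) = x
      rw [heq]
      show emb.elem (Sum.inl b) = x
      rw [hnewV b hb]
      exact hx'emb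
    · intro k b hb heq
      apply hx1
      refine ⟨Sum.inr k, ?_⟩
      show Sum.inr (c.rc.fE k) = x
      rw [heq]
      show emb.elem (Sum.inr b) = x
      rw [hnewE b hb]
      exact hx'emb
  have hfact : rc'.comp iKm' = ρ.rg := by
    rw [show iKm' = j.comp c.ιKm from rfl, ← comp_assoc,
      show rc'.comp j = c.rc from med_inB c.ιKm iplus c.rc emb hco1]
    exact c.factR
  have hjinj : j.Injective := inB_inj _ _
  have hjnbij : ¬ j.Bijective := by
    intro hbij
    cases hxx : x' with
    | inl v =>
      have hv : ∀ a, iplus.fV a ≠ v := fun a ha =>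
        hx'new ⟨Sum.inl a, by rw [hxx]; exact congrArg Sum.inl ha⟩
      obtain ⟨kk, hkk⟩ := hbij.1.2 (Sum.inr ⟨v, hv⟩ : (poT c.ιKm iplus).gr.V)
      exact Sum.inl_ne_inr hkk
    | inr e =>
      have he : ∀ a, iplus.fE a ≠ e := fun a ha =>
        hx'new ⟨Sum.inr a, by rw [hxx]; exact congrArg Sum.inr ha⟩
      obtain ⟨kk, hkk⟩ := hbij.2.2 (Sum.inr ⟨e, he⟩ : (poT c.ιKm iplus).gr.E)
      exact Sum.inl_ne_inr hkk
  have he2'inj : e2'.Injective := by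
    refine med_injective c.ιKm iplus (t.m.comp c.lc) mbp hco2
      (comp_inj t.m_inj c.lc_inj) hmbpinj ?_ ?_
    · intro k b hb heq
      apply hx'notin
      rw [← hnewV b hb]
      exact ⟨Sum.inl (c.lc.fV k), congrArg Sum.inl heq⟩
    · intro k b hb heq
      apply hx'notin
      rw [← hnewE b hb]
      exact ⟨Sum.inr (c.lc.fE k), congrArg Sum.inr heq⟩
  have he2'comm : e2'.comp iKm' = (t.m.comp c.ιLc).comp ρ.lb := by
    rw [show iKm' = j.comp c.ιKm from rfl, ← comp_assoc,
      show e2'.comp j = t.m.comp c.lc from med_inB c.ιKm iplus (t.m.comp c.lc) mbp hco2]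
    exact congrArg t.m.comp c.po.1.symm
  have hpo_pb_V : ∀ li kc, c.u.fV li = c.lc.fV kc → ∃ k, c.ιKm.fV k = kc := by
    obtain ⟨φ, hφ, -⟩ := c.po.2 (poT (c.ιLi.comp ρ.lb) c.ιKm)
      (inB (c.ιLi.comp ρ.lb) c.ιKm) (inC (c.ιLi.comp ρ.lb) c.ιKm c.ιKm_inj)
      (po_comm _ _ c.ιKm_inj)
    intro li kc h
    have e1 : φ.fV (c.u.fV li) = Sum.inl li := congr_fV hφ.1 li
    have e2 : φ.fV (c.lc.fV kc) = inCV (c.ιLi.comp ρ.lb) c.ιKm kc := congr_fV hφ.2 kc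
    have h2 : inCV (c.ιLi.comp ρ.lb) c.ιKm kc = Sum.inl li := by
      rw [← e2, ← e1, h]
    exact inCV_inl _ _ h2
  have hpo_pb_E : ∀ li kc, c.u.fE li = c.lc.fE kc → ∃ k, c.ιKm.fE k = kc := by
    obtain ⟨φ, hφ, -⟩ := c.po.2 (poT (c.ιLi.comp ρ.lb) c.ιKm)
      (inB (c.ιLi.comp ρ.lb) c.ιKm) (inC (c.ιLi.comp ρ.lb) c.ιKm c.ιKm_inj)
      (po_comm _ _ c.ιKm_inj)
    intro li kc h
    have e1 : φ.fE (c.u.fE li) = Sum.inl li := congr_fE hφ.1 li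
    have e2 : φ.fE (c.lc.fE kc) = inCE (c.ιLi.comp ρ.lb) c.ιKm kc := congr_fE hφ.2 kc
    have h2 : inCE (c.ιLi.comp ρ.lb) c.ιKm kc = Sum.inl li := by
      rw [← e2, ← e1, h]
    exact inCE_inl _ _ h2
  have hco3 : (t.m.comp c.u).comp (c.ιLi.comp ρ.lb) = e2'.comp iKm' := by
    rw [he2'comm]
    rfl
  let Lc'' : TGraph TG := poT (c.ιLi.comp ρ.lb) iKm'
  let u'' : THom c.Li Lc'' := inB (c.ιLi.comp ρ.lb) iKm'
  let lc'' : THom Kc' Lc'' := inC (c.ιLi.comp ρ.lb) iKm' hiKm'inj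
  let w : THom Lc'' G := med (c.ιLi.comp ρ.lb) iKm' (t.m.comp c.u) e2' hco3
  have hwinj : w.Injective := by
    refine med_injective (c.ιLi.comp ρ.lb) iKm' (t.m.comp c.u) e2' hco3
      (comp_inj t.m_inj c.u_inj) he2'inj ?_ ?_
    · rintro li (kc | ⟨b, hb⟩) hk heq
      · have hkc : ∀ a, c.ιKm.fV a ≠ kc := fun a ha => hk a (congrArg Sum.inl ha)
        have heq' : t.m.fV (c.u.fV li) = t.m.fV (c.lc.fV kc) := heq
        obtain ⟨k, hkk⟩ := hpo_pb_V li kc (t.m_inj.1 heq')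
        exact hkc k hkk
      · apply hx'notin
        rw [← hnewV b hb]
        exact ⟨Sum.inl (c.u.fV li), congrArg Sum.inl heq⟩
    · rintro li (kc | ⟨b, hb⟩) hk heq
      · have hkc : ∀ a, c.ιKm.fE a ≠ kc := fun a ha => hk a (congrArg Sum.inl ha)
        have heq' : t.m.fE (c.u.fE li) = t.m.fE (c.lc.fE kc) := heq
        obtain ⟨k, hkk⟩ := hpo_pb_E li kc (t.m_inj.2 heq')
        exact hkc k hkk
      · apply hx'notin
        rw [← hnewE b hb]
        exact ⟨Sum.inr (c.u.fE li), congrArg Sum.inr heq⟩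
  exact hlc.2 Kc' iKm' rc' j hiKm'inj hrc'inj hfact hjinj hjnbij rfl
    (med_inB c.ιKm iplus c.rc emb hco1) e2' he2'inj he2'comm
    Lc'' u'' lc'' (po_ispo (c.ιLi.comp ρ.lb) iKm' hiKm'inj) w
    (med_inB (c.ιLi.comp ρ.lb) iKm' (t.m.comp c.u) e2' hco3)
    (med_inC (c.ιLi.comp ρ.lb) iKm' hiKm'inj (t.m.comp c.u) e2' hco3)
    hwinj
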